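/- Let (A,d) and (B,d) be complete DGAs with Maurer-Cartan elements θ ∈ MC(A) and ω ∈ MC(B), and let (P,d) be a complete DG A-B-bimodule. Let r ≥ 1 and suppose H¹(F_p P / F_{p+1} P, d_{ω,θ}) = 0 for all p ≥ r, where d_{ω,θ}(x) = d(x) + θx − (−1)^{|x|} xω. Then for any x ∈ P^0 satisfying xω − θx ≡ dx mod F_r P, there exists y ∈ P^0 with yω − θy = dy and y ≡ x mod F_r P. Moreover, if additionally H⁰(F_p P / F_{p+1} P, d_{ω,θ}) = 0 for all p ≥ r, then any two such y, y' are homotopic: there exists h ∈ P^{−1} with y − y' = dh + hω + θh. -/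

import Mathlib

/-
STATEMENT 6: Let (A,d), (B,d) be complete DGAs with Maurer-Cartan elements θ ∈ MC(A),
ω ∈ MC(B), and let (P,d) be a complete DG A-B-bimodule (right action of B written through
Bᵐᵒᵖ).  If H¹(F_p P/F_{p+1} P, d_{ω,θ}) = 0 for all p ≥ r, then any x ∈ P⁰ with
xω − θx ≡ dx mod F_r P can be corrected to y ∈ P⁰ with yω − θy = dy, y ≡ x mod F_r P.
If moreover H⁰(F_p P/F_{p+1} P, d_{ω,θ}) = 0 for all p ≥ r, any two such y, y' are
homotopic: y − y' = dh + hω + θh for some h ∈ P^{-1}.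
-/

def stmt6Dm {A B P : Type} [Ring A] [Ring B] [AddCommGroup P]
    [Module A P] [Module Bᵐᵒᵖ P] (d : P → P) (θ : A) (ω : B) (z : P) : P :=
  d z + θ • z - MulOpposite.op ω • z

def stmt6Dp {A B P : Type} [Ring A] [Ring B] [AddCommGroup P]
    [Module A P] [Module Bᵐᵒᵖ P] (d : P → P) (θ : A) (ω : B) (z : P) : P :=
  d z + θ • z + MulOpposite.op ω • z

theorem stmt6 {A B P : Type} [Ring A] [Algebra ℝ A] [Ring B] [Algebra ℝ B]
    [AddCommGroup P] [Module ℝ P] [Module A P] [Module Bᵐᵒᵖ P]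
    [SMulCommClass A Bᵐᵒᵖ P] [IsScalarTower ℝ A P] [IsScalarTower ℝ Bᵐᵒᵖ P]
    -- gradings:
    (degA : ℤ → Submodule ℝ A) (degB : ℤ → Submodule ℝ B) (degP : ℤ → Submodule ℝ P)
    (mulA_mem : ∀ {m n : ℤ} {a b : A}, a ∈ degA m → b ∈ degA n → a * b ∈ degA (m + n))
    (mulB_mem : ∀ {m n : ℤ} {a b : B}, a ∈ degB m → b ∈ degB n → a * b ∈ degB (m + n))
    (smulL_mem : ∀ {m n : ℤ} {a : A} {x : P}, a ∈ degA m → x ∈ degP n → a • x ∈ degP (m + n))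
    (smulR_mem : ∀ {m n : ℤ} {b : B} {x : P}, b ∈ degB m → x ∈ degP n →
      MulOpposite.op b • x ∈ degP (m + n))
    -- differentials:
    (dA : A →ₗ[ℝ] A) (dB : B →ₗ[ℝ] B) (dP : P →ₗ[ℝ] P)
    (dA_deg : ∀ {n : ℤ} {a : A}, a ∈ degA n → dA a ∈ degA (n + 1))
    (dB_deg : ∀ {n : ℤ} {b : B}, b ∈ degB n → dB b ∈ degB (n + 1))
    (dP_deg : ∀ {n : ℤ} {x : P}, x ∈ degP n → dP x ∈ degP (n + 1))
    (dA_sq : ∀ a : A, dA (dA a) = 0) (dB_sq : ∀ b : B, dB (dB b) = 0)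
    (dP_sq : ∀ x : P, dP (dP x) = 0)
    (dA_leib : ∀ {n : ℤ} {a b : A}, a ∈ degA n →
      dA (a * b) = dA a * b + ((-1 : ℝ) ^ n) • (a * dA b))
    (dB_leib : ∀ {n : ℤ} {a b : B}, a ∈ degB n →
      dB (a * b) = dB a * b + ((-1 : ℝ) ^ n) • (a * dB b))
    (dP_leibL : ∀ {n : ℤ} {a : A} {x : P}, a ∈ degA n →
      dP (a • x) = dA a • x + ((-1 : ℝ) ^ n) • (a • dP x))
    (dP_leibR : ∀ {n : ℤ} {b : B} {x : P}, x ∈ degP n →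
      dP (MulOpposite.op b • x) =
        MulOpposite.op b • dP x + ((-1 : ℝ) ^ n) • (MulOpposite.op (dB b) • x))
    -- filtrations:
    (FA : ℕ → Submodule ℝ A) (FB : ℕ → Submodule ℝ B) (FP : ℕ → Submodule ℝ P)
    (FA_zero : FA 0 = ⊤) (FB_zero : FB 0 = ⊤) (FP_zero : FP 0 = ⊤)
    (FA_mono : ∀ p, FA (p + 1) ≤ FA p) (FB_mono : ∀ p, FB (p + 1) ≤ FB p)
    (FP_mono : ∀ p, FP (p + 1) ≤ FP p)
    (FA_mul : ∀ p q : ℕ, ∀ a b : A, a ∈ FA p → b ∈ FA q → a * b ∈ FA (p + q))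
    (FB_mul : ∀ p q : ℕ, ∀ a b : B, a ∈ FB p → b ∈ FB q → a * b ∈ FB (p + q))
    (FP_smulL : ∀ p q : ℕ, ∀ (a : A) (x : P), a ∈ FA p → x ∈ FP q → a • x ∈ FP (p + q))
    (FP_smulR : ∀ p q : ℕ, ∀ (b : B) (x : P), b ∈ FB p → x ∈ FP q →
      MulOpposite.op b • x ∈ FP (p + q))
    (FA_d : ∀ p : ℕ, ∀ a ∈ FA p, dA a ∈ FA p) (FB_d : ∀ p : ℕ, ∀ b ∈ FB p, dB b ∈ FB p)
    (FP_d : ∀ p : ℕ, ∀ x ∈ FP p, dP x ∈ FP p)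
    (sepP : ∀ x : P, (∀ p, x ∈ FP p) → x = 0)
    (complP : ∀ x : ℕ → P, (∀ p, x (p + 1) - x p ∈ FP p) → ∃ y : P, ∀ p, y - x p ∈ FP p)
    (degP_closed : ∀ (n : ℤ) (x : P), (∀ p, ∃ y ∈ degP n, x - y ∈ FP p) → x ∈ degP n)
    -- Maurer-Cartan elements:
    (θ : A) (hθdeg : θ ∈ degA 1) (hθ : dA θ + θ * θ = 0)
    (ω : B) (hωdeg : ω ∈ degB 1) (hω : dB ω + ω * ω = 0)
    (r : ℕ) (hr : 1 ≤ r)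
    -- H¹(F_p P/F_{p+1} P, d_{ω,θ}) = 0 for all p ≥ r:
    (H1 : ∀ p : ℕ, r ≤ p → ∀ x : P, x ∈ FP p → x ∈ degP 1 →
      dP x + θ • x + MulOpposite.op ω • x ∈ FP (p + 1) →
      ∃ y : P, y ∈ FP p ∧ y ∈ degP 0 ∧
        x - (dP y + θ • y - MulOpposite.op ω • y) ∈ FP (p + 1)) :
    -- Conclusion 1: correction of approximate Maurer-Cartan morphisms
    (∀ x : P, x ∈ degP 0 → MulOpposite.op ω • x - θ • x - dP x ∈ FP r →
      ∃ y : P, y ∈ degP 0 ∧ MulOpposite.op ω • y - θ • y = dP y ∧ y - x ∈ FP r) ∧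
    -- Conclusion 2: uniqueness up to homotopy, under the extra H⁰ hypothesis
    ((∀ p : ℕ, r ≤ p → ∀ x : P, x ∈ FP p → x ∈ degP 0 →
        dP x + θ • x - MulOpposite.op ω • x ∈ FP (p + 1) →
        ∃ z : P, z ∈ FP p ∧ z ∈ degP (-1) ∧
          x - (dP z + θ • z + MulOpposite.op ω • z) ∈ FP (p + 1)) →
      ∀ x y y' : P, x ∈ degP 0 →
        MulOpposite.op ω • x - θ • x - dP x ∈ FP r →
        y ∈ degP 0 → MulOpposite.op ω • y - θ • y = dP y → y - x ∈ FP r →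
        y' ∈ degP 0 → MulOpposite.op ω • y' - θ • y' = dP y' → y' - x ∈ FP r →
        ∃ h : P, h ∈ degP (-1) ∧
          y - y' = dP h + MulOpposite.op ω • h + θ • h) := by
  classical
  -- notation
  set Dm : P → P := stmt6Dm (⇑dP) θ ω with hDmdef
  set Dp : P → P := stmt6Dp (⇑dP) θ ω with hDpdef
  have hDm : ∀ z : P, Dm z = dP z + θ • z - MulOpposite.op ω • z := fun z => rfl
  have hDp : ∀ z : P, Dp z = dP z + θ • z + MulOpposite.op ω • z := fun z => rfl
  -- filtration monotonicity
  have FP_le : ∀ {p q : ℕ}, p ≤ q → FP q ≤ FP p := by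
    intro p q h
    induction h with
    | refl => exact le_rfl
    | step _ ih => exact le_trans (FP_mono _) ih
  have hθF : ∀ (p : ℕ) (z : P), z ∈ FP p → θ • z ∈ FP p := by
    intro p z hz
    have := FP_smulL 0 p θ z (by simp [FA_zero]) hz
    simpa using this
  have hωF : ∀ (p : ℕ) (z : P), z ∈ FP p → MulOpposite.op ω • z ∈ FP p := by
    intro p z hz
    have := FP_smulR 0 p ω z (by simp [FB_zero]) hz
    simpa using this
  have DmF : ∀ (p : ℕ) (z : P), z ∈ FP p → Dm z ∈ FP p := by
    intro p z hz
    rw [hDm]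
    exact Submodule.sub_mem _ (Submodule.add_mem _ (FP_d p z hz) (hθF p z hz)) (hωF p z hz)
  have DpF : ∀ (p : ℕ) (z : P), z ∈ FP p → Dp z ∈ FP p := by
    intro p z hz
    rw [hDp]
    exact Submodule.add_mem _ (Submodule.add_mem _ (FP_d p z hz) (hθF p z hz)) (hωF p z hz)
  have Dm_sub : ∀ a b : P, Dm (a - b) = Dm a - Dm b := by
    intro a b; simp only [hDm, map_sub, smul_sub]; abel
  have Dp_add : ∀ a b : P, Dp (a + b) = Dp a + Dp b := by
    intro a b; simp only [hDp, map_add, smul_add]; abel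
  have Dp_zero : Dp (0 : P) = 0 := by simp [hDp]
  -- degrees
  have Dm_deg : ∀ z : P, z ∈ degP 0 → Dm z ∈ degP 1 := by
    intro z hz
    rw [hDm]
    refine Submodule.sub_mem _ (Submodule.add_mem _ ?_ ?_) ?_
    · simpa using dP_deg hz
    · simpa using smulL_mem hθdeg hz
    · simpa using smulR_mem hωdeg hz
  have Dp_degm : ∀ z : P, z ∈ degP (-1) → Dp z ∈ degP 0 := by
    intro z hz
    rw [hDp]
    refine Submodule.add_mem _ (Submodule.add_mem _ ?_ ?_) ?_
    · simpa using dP_deg hz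
    · simpa using smulL_mem hθdeg hz
    · simpa using smulR_mem hωdeg hz
  -- Maurer-Cartan identities
  have hθθ : dA θ = -(θ * θ) := eq_neg_of_add_eq_zero_left hθ
  have hωω : dB ω = -(ω * ω) := eq_neg_of_add_eq_zero_left hω
  have dθsmul : ∀ z : P, dP (θ • z) = dA θ • z - θ • dP z := by
    intro z
    rw [dP_leibL hθdeg, zpow_one, neg_one_smul, ← sub_eq_add_neg]
  -- d² = 0 for the twisted differential, degree 0 → 2
  have key1 : ∀ z : P, z ∈ degP 0 → Dp (Dm z) = 0 := by
    intro z hz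
    have h2 : dP (MulOpposite.op ω • z) =
        MulOpposite.op ω • dP z + MulOpposite.op (dB ω) • z := by
      rw [dP_leibR hz, zpow_zero, one_smul]
    rw [hDp, hDm]
    simp only [map_sub, map_add]
    rw [dθsmul, h2, dP_sq]
    simp only [smul_add, smul_sub, ← smul_comm θ (MulOpposite.op ω), ← mul_smul,
      ← MulOpposite.op_mul, hθθ, hωω, MulOpposite.op_neg, neg_smul]
    abel
  -- d² = 0 for the twisted differential, degree -1 → 1
  have key2 : ∀ z : P, z ∈ degP (-1) → Dm (Dp z) = 0 := by
    intro z hz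
    have hm1 : ((-1 : ℝ)) ^ (-1 : ℤ) = -1 := by norm_num
    have h2 : dP (MulOpposite.op ω • z) =
        MulOpposite.op ω • dP z - MulOpposite.op (dB ω) • z := by
      rw [dP_leibR hz, hm1, neg_one_smul, ← sub_eq_add_neg]
    rw [hDm, hDp]
    simp only [map_sub, map_add]
    rw [dθsmul, h2, dP_sq]
    simp only [smul_add, smul_sub, ← smul_comm θ (MulOpposite.op ω), ← mul_smul,
      ← MulOpposite.op_mul, hθθ, hωω, MulOpposite.op_neg, neg_smul]
    abel
  constructor
  · -- Conclusion 1
    intro x hx0 hxF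
    have hDmx : Dm x ∈ FP r := by
      have h1 : Dm x = -(MulOpposite.op ω • x - θ • x - dP x) := by rw [hDm]; abel
      rw [h1]; exact Submodule.neg_mem _ hxF
    -- one correction step
    have step : ∀ (p : ℕ) (w : P), w ∈ degP 0 → Dm w ∈ FP (r + p) →
        ∃ w' : P, w' ∈ degP 0 ∧ Dm w' ∈ FP (r + p + 1) ∧ w' - w ∈ FP (r + p) := by
      intro p w h0 hF
      obtain ⟨u, huF, hu0, huc⟩ := H1 (r + p) (Nat.le_add_right r p) (Dm w) hF
        (Dm_deg w h0)
        (by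
          have : dP (Dm w) + θ • Dm w + MulOpposite.op ω • Dm w = Dp (Dm w) := (hDp _).symm
          rw [this, key1 w h0]; exact Submodule.zero_mem _)
      refine ⟨w - u, Submodule.sub_mem _ h0 hu0, ?_, by simpa using Submodule.neg_mem _ huF⟩
      rw [Dm_sub]
      have : Dm u = dP u + θ • u - MulOpposite.op ω • u := hDm u
      rw [this]
      exact huc
    choose f hf0 hf1 hf2 using step
    let g : ℕ → P := fun p => Nat.rec x
      (fun p xp => if h : xp ∈ degP 0 ∧ Dm xp ∈ FP (r + p) then f p xp h.1 h.2 else 0) p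
    have hg0 : g 0 = x := rfl
    have hgsucc : ∀ p, g (p + 1) =
        if h : g p ∈ degP 0 ∧ Dm (g p) ∈ FP (r + p) then f p (g p) h.1 h.2 else 0 :=
      fun p => rfl
    have hg : ∀ p, g p ∈ degP 0 ∧ Dm (g p) ∈ FP (r + p) := by
      intro p
      induction p with
      | zero => exact ⟨hx0, by simpa [hg0] using hDmx⟩
      | succ p ih =>
        rw [hgsucc p, dif_pos ih]
        exact ⟨hf0 p (g p) ih.1 ih.2, hf1 p (g p) ih.1 ih.2⟩
    have hgdiff : ∀ p, g (p + 1) - g p ∈ FP (r + p) := by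
      intro p
      rw [hgsucc p, dif_pos (hg p)]
      exact hf2 p (g p) (hg p).1 (hg p).2
    -- assemble the limit
    let X : ℕ → P := fun p => g (p - r)
    have hXdiff : ∀ p, X (p + 1) - X p ∈ FP p := by
      intro p
      by_cases h : r ≤ p
      · have e1 : p + 1 - r = (p - r) + 1 := by omega
        have e2 : r + (p - r) = p := by omega
        show g (p + 1 - r) - g (p - r) ∈ FP p
        rw [e1]
        have := hgdiff (p - r)
        rwa [e2] at this
      · have e1 : p + 1 - r = 0 := by omega
        have e2 : p - r = 0 := by omega
        show g (p + 1 - r) - g (p - r) ∈ FP p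
        rw [e1, e2, sub_self]
        exact Submodule.zero_mem _
    obtain ⟨y, hy⟩ := complP X hXdiff
    have hy0 : y ∈ degP 0 := by
      refine degP_closed 0 y fun p => ⟨X p, (hg (p - r)).1, hy p⟩
    have hDmy : Dm y = 0 := by
      apply sepP
      intro p
      have h1 : Dm y - Dm (X (r + p)) ∈ FP p := by
        rw [← Dm_sub]
        exact FP_le (Nat.le_add_left p r) (DmF _ _ (hy (r + p)))
      have h2 : Dm (X (r + p)) ∈ FP p := by
        have e : r + p - r = p := by omega
        show Dm (g (r + p - r)) ∈ FP p
        rw [e]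
        exact FP_le (Nat.le_add_left p r) (hg p).2
      simpa using Submodule.add_mem _ h1 h2
    refine ⟨y, hy0, ?_, ?_⟩
    · have h1 : MulOpposite.op ω • y - θ • y - dP y = -(Dm y) := by rw [hDm]; abel
      have h2 : MulOpposite.op ω • y - θ • y - dP y = 0 := by rw [h1, hDmy, neg_zero]
      exact sub_eq_zero.mp h2
    · have := hy r
      have e : r - r = 0 := by omega
      show y - x ∈ FP r
      rw [← hg0, ← e]
      exact this
  · -- Conclusion 2
    intro H0 x y y' hx0 hxF hy0 hyMC hyx hy'0 hy'MC hy'x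
    set z : P := y - y' with hzdef
    have hz0 : z ∈ degP 0 := Submodule.sub_mem _ hy0 hy'0
    have hzF : z ∈ FP r := by
      have : z = (y - x) - (y' - x) := by rw [hzdef]; abel
      rw [this]
      exact Submodule.sub_mem _ hyx hy'x
    have hDmy : Dm y = 0 := by
      rw [hDm, ← hyMC]; abel
    have hDmy' : Dm y' = 0 := by
      rw [hDm, ← hy'MC]; abel
    have hDmz : Dm z = 0 := by rw [hzdef, Dm_sub, hDmy, hDmy', sub_zero]
    have step : ∀ (p : ℕ) (w : P), w ∈ degP (-1) → z - Dp w ∈ FP (r + p) →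
        ∃ w' : P, w' ∈ degP (-1) ∧ z - Dp w' ∈ FP (r + p + 1) ∧ w' - w ∈ FP (r + p) := by
      intro p w hdeg hF
      have hw0 : z - Dp w ∈ degP 0 := Submodule.sub_mem _ hz0 (Dp_degm w hdeg)
      have hwc : Dm (z - Dp w) = 0 := by
        rw [Dm_sub, hDmz, key2 w hdeg, sub_zero]
      obtain ⟨u, huF, hud, huc⟩ := H0 (r + p) (Nat.le_add_right r p) (z - Dp w) hF hw0
        (by
          have : dP (z - Dp w) + θ • (z - Dp w) - MulOpposite.op ω • (z - Dp w)
              = Dm (z - Dp w) := (hDm _).symm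
          rw [this, hwc]; exact Submodule.zero_mem _)
      refine ⟨w + u, Submodule.add_mem _ hdeg hud, ?_, by simpa using huF⟩
      rw [Dp_add]
      have e : z - (Dp w + Dp u) = (z - Dp w) - Dp u := by abel
      rw [e]
      have : Dp u = dP u + θ • u + MulOpposite.op ω • u := hDp u
      rw [this]
      exact huc
    choose f hf0 hf1 hf2 using step
    let g : ℕ → P := fun p => Nat.rec (0 : P)
      (fun p hp => if h : hp ∈ degP (-1) ∧ z - Dp hp ∈ FP (r + p) then f p hp h.1 h.2 else 0) p
    have hg0 : g 0 = 0 := rfl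
    have hgsucc : ∀ p, g (p + 1) =
        if h : g p ∈ degP (-1) ∧ z - Dp (g p) ∈ FP (r + p) then f p (g p) h.1 h.2 else 0 :=
      fun p => rfl
    have hg : ∀ p, g p ∈ degP (-1) ∧ z - Dp (g p) ∈ FP (r + p) := by
      intro p
      induction p with
      | zero =>
        refine ⟨Submodule.zero_mem _, ?_⟩
        rw [hg0, Dp_zero, sub_zero]
        simpa using hzF
      | succ p ih =>
        rw [hgsucc p, dif_pos ih]
        exact ⟨hf0 p (g p) ih.1 ih.2, hf1 p (g p) ih.1 ih.2⟩
    have hgdiff : ∀ p, g (p + 1) - g p ∈ FP (r + p) := by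
      intro p
      rw [hgsucc p, dif_pos (hg p)]
      exact hf2 p (g p) (hg p).1 (hg p).2
    let X : ℕ → P := fun p => g (p - r)
    have hXdiff : ∀ p, X (p + 1) - X p ∈ FP p := by
      intro p
      by_cases h : r ≤ p
      · have e1 : p + 1 - r = (p - r) + 1 := by omega
        have e2 : r + (p - r) = p := by omega
        show g (p + 1 - r) - g (p - r) ∈ FP p
        rw [e1]
        have := hgdiff (p - r)
        rwa [e2] at this
      · have e1 : p + 1 - r = 0 := by omega
        have e2 : p - r = 0 := by omega
        show g (p + 1 - r) - g (p - r) ∈ FP p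
        rw [e1, e2, sub_self]
        exact Submodule.zero_mem _
    obtain ⟨h, hh⟩ := complP X hXdiff
    have hhdeg : h ∈ degP (-1) := by
      refine degP_closed (-1) h fun p => ⟨X p, (hg (p - r)).1, hh p⟩
    have hzDp : z - Dp h = 0 := by
      apply sepP
      intro p
      have h1 : Dp h - Dp (X (r + p)) ∈ FP p := by
        have e : Dp h - Dp (X (r + p)) = Dp h - Dp (X (r + p)) := rfl
        have hsub : Dp (h - X (r + p)) = Dp h - Dp (X (r + p)) := by
          simp only [hDp, map_sub, smul_sub]; abel
        rw [← hsub]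
        exact FP_le (Nat.le_add_left p r) (DpF _ _ (hh (r + p)))
      have h2 : z - Dp (X (r + p)) ∈ FP p := by
        have e : r + p - r = p := by omega
        show z - Dp (g (r + p - r)) ∈ FP p
        rw [e]
        exact FP_le (Nat.le_add_left p r) (hg p).2
      have : z - Dp h = (z - Dp (X (r + p))) - (Dp h - Dp (X (r + p))) := by abel
      rw [this]
      exact Submodule.sub_mem _ h2 h1
    refine ⟨h, hhdeg, ?_⟩
    have hzeq : z = Dp h := by
      have := sub_eq_zero.mp hzDp
      exact this
    have : dP h + MulOpposite.op ω • h + θ • h = Dp h := by rw [hDp]; abel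
    rw [this, ← hzeq]
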